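/- Let α > 1. There exists C > 0 depending only on α such that for every t > 0 and every family (a_r)_{r∈[0,t]} of functions a_r : ℤ² → ℂ with a_r(0) = 0, such that r ↦ a_r(m) is continuous on [0,t] for every m and sup_{r∈[0,t]} ∑_{m∈ℤ²∖{0}} |m|^{−2(α+1)}|a_r(m)|² < ∞, one has: ∫₀ᵗ ∑_{k∈ℤ²∖{0}} |k|^{−2α} ( ∫ₛᵗ e^{−|k|²(r−s)} ( ∑_{ℓ∈ℤ², 0<|ℓ|≤√2, ℓ≠k} (1 − |k|²/|ℓ−k|²)² |a_r(ℓ−k)|² )^{1/2} dr )² ds ≤ C t³ sup_{r∈[0,t]} ∑_{m∈ℤ²∖{0}} |m|^{−2(α+1)}|a_r(m)|². -/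

import Mathlib

open scoped ENNReal
open MeasureTheory intervalIntegral

/-- Squared Euclidean norm of a lattice point `k ∈ ℤ²`. -/
noncomputable def nsq (k : ℤ × ℤ) : ℝ := (k.1 : ℝ) ^ 2 + (k.2 : ℝ) ^ 2

lemma nsq_nonneg (k : ℤ × ℤ) : 0 ≤ nsq k := by unfold nsq; positivity

lemma one_le_nsq {k : ℤ × ℤ} (hk : k ≠ 0) : 1 ≤ nsq k := by
  have h : k.1 ≠ 0 ∨ k.2 ≠ 0 := by
    by_contra h; push_neg at h; exact hk (Prod.ext h.1 h.2)
  unfold nsq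
  rcases h with h | h
  · have h1 : (1:ℤ) ≤ k.1 ^ 2 := by rcases lt_or_gt_of_ne h with h | h <;> nlinarith
    have h2 : (1:ℝ) ≤ (k.1:ℝ) ^ 2 := by exact_mod_cast h1
    nlinarith [sq_nonneg (k.2:ℝ)]
  · have h1 : (1:ℤ) ≤ k.2 ^ 2 := by rcases lt_or_gt_of_ne h with h | h <;> nlinarith
    have h2 : (1:ℝ) ≤ (k.2:ℝ) ^ 2 := by exact_mod_cast h1
    nlinarith [sq_nonneg (k.1:ℝ)]

lemma aux24 {p L q : ℝ} (hL0 : 0 ≤ L) (hL2 : L ≤ 2) (hq : 1 ≤ q)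
    (hp2 : p ^ 2 ≤ 2 * q) : (2 * p - L) ^ 2 ≤ 24 * q := by
  rcases le_or_gt p 0 with hp | hp
  · nlinarith [sq_nonneg (p + 2), sq_nonneg (p + L)]
  · nlinarith [sq_nonneg (p - 2), sq_nonneg (p - L)]

lemma aux16 {p L q n : ℝ} (hL0 : 0 ≤ L) (hq : 1 ≤ q) (hn : 1 ≤ n)
    (hp2 : p ^ 2 ≤ 2 * q) (hqn : n = L - 2 * p + q) : q ≤ 16 * n := by
  rcases le_or_gt q 16 with h | h
  · linarith
  · have h32 : 32 * p ≤ 15 * q := by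
      rcases le_or_gt p 0 with hp0 | hp0
      · linarith
      · have hsq : (32 * p) ^ 2 ≤ (15 * q) ^ 2 := by nlinarith
        nlinarith
    linarith

lemma key_bound {α : ℝ} (hα : 1 < α) {k ℓ : ℤ × ℤ} (hk : k ≠ 0) (hℓk : ℓ ≠ k)
    (hℓ2 : nsq ℓ ≤ 2) :
    nsq k ^ (-α) * (1 - nsq k / nsq (ℓ - k)) ^ 2 ≤ 24 * 16 ^ α * nsq (ℓ - k) ^ (-(α + 1)) := by
  have hm : ℓ - k ≠ 0 := sub_ne_zero.mpr hℓk
  have hn1 : 1 ≤ nsq k := one_le_nsq hk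
  have hq1 : 1 ≤ nsq (ℓ - k) := one_le_nsq hm
  set n := nsq k with hnn
  set q := nsq (ℓ - k) with hqq
  have hn0 : (0:ℝ) < n := by linarith
  have hq0 : (0:ℝ) < q := by linarith
  set a1 : ℝ := (ℓ.1 : ℝ); set a2 : ℝ := (ℓ.2 : ℝ)
  set b1 : ℝ := ((ℓ - k).1 : ℝ); set b2 : ℝ := ((ℓ - k).2 : ℝ)
  have hL : nsq ℓ = a1 ^ 2 + a2 ^ 2 := rfl
  have hq' : q = b1 ^ 2 + b2 ^ 2 := rfl
  have hn' : n = (a1 - b1) ^ 2 + (a2 - b2) ^ 2 := by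
    have e1 : (k.1 : ℝ) = a1 - b1 := by
      simp only [a1, b1, Prod.fst_sub]; push_cast; ring
    have e2 : (k.2 : ℝ) = a2 - b2 := by
      simp only [a2, b2, Prod.snd_sub]; push_cast; ring
    rw [hnn]; unfold nsq; rw [e1, e2]
  set p : ℝ := a1 * b1 + a2 * b2 with hp
  have hcs : p ^ 2 ≤ nsq ℓ * q := by
    rw [hL, hq']; nlinarith [sq_nonneg (a1 * b2 - a2 * b1)]
  have hLnn : 0 ≤ nsq ℓ := nsq_nonneg ℓ
  have hp2 : p ^ 2 ≤ 2 * q := by nlinarith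
  have h24 : (q - n) ^ 2 ≤ 24 * q := by
    have hqn : q - n = 2 * p - nsq ℓ := by rw [hn', hL, hq', hp]; ring
    rw [hqn]
    exact aux24 hLnn hℓ2 hq1 hp2
  have h16 : q ≤ 16 * n := by
    have hqn : n = nsq ℓ - 2 * p + q := by rw [hn', hL, hq', hp]; ring
    exact aux16 hLnn hq1 hn1 hp2 hqn
  -- rpow part
  have h1 : (1 - n / q) ^ 2 ≤ 24 / q := by
    have e : 1 - n / q = (q - n) / q := by field_simp
    rw [e, div_pow, div_le_div_iff₀ (by positivity) hq0]
    nlinarith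
  have h2 : n ^ (-α) ≤ 16 ^ α * q ^ (-α) := by
    have h3 : q / 16 ≤ n := by linarith
    have h4 : n ^ (-α) ≤ (q / 16) ^ (-α) :=
      Real.rpow_le_rpow_of_nonpos (by positivity) h3 (by linarith)
    have h5 : (q / 16) ^ (-α) = 16 ^ α * q ^ (-α) := by
      rw [Real.rpow_neg (by positivity), Real.div_rpow hq0.le (by norm_num : (0:ℝ) ≤ 16),
        Real.rpow_neg hq0.le, inv_div, div_eq_mul_inv]
    linarith [h4, h5.le, h5.ge]
  have hqsplit : q ^ (-(α + 1)) = q ^ (-α) * q⁻¹ := by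
    rw [show -(α + 1) = -α + (-1) by ring, Real.rpow_add hq0, Real.rpow_neg_one]
  have hq2 : (0:ℝ) ≤ 24 / q := by positivity
  have hn2 : (0:ℝ) ≤ n ^ (-α) := Real.rpow_nonneg hn0.le _
  calc n ^ (-α) * (1 - n / q) ^ 2 ≤ (16 ^ α * q ^ (-α)) * (24 / q) := by
        apply mul_le_mul h2 h1 (sq_nonneg _) (by positivity)
    _ = 24 * 16 ^ α * (q ^ (-α) * q⁻¹) := by field_simp
    _ = 24 * 16 ^ α * q ^ (-(α + 1)) := by rw [hqsplit]

lemma mem_lowF {ℓ : ℤ × ℤ} (h : nsq ℓ ≤ 2) : ℓ ∈ Finset.Icc ((-1, -1) : ℤ × ℤ) (1, 1) := by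
  have h1 : (ℓ.1 : ℝ) ^ 2 ≤ 2 := by unfold nsq at h; nlinarith [sq_nonneg (ℓ.2 : ℝ)]
  have h2 : (ℓ.2 : ℝ) ^ 2 ≤ 2 := by unfold nsq at h; nlinarith [sq_nonneg (ℓ.1 : ℝ)]
  have h1' : ℓ.1 ^ 2 ≤ 2 := by exact_mod_cast h1
  have h2' : ℓ.2 ^ 2 ≤ 2 := by exact_mod_cast h2
  have hb1 : -1 ≤ ℓ.1 ∧ ℓ.1 ≤ 1 := by constructor <;> nlinarith
  have hb2 : -1 ≤ ℓ.2 ∧ ℓ.2 ≤ 1 := by constructor <;> nlinarith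
  rw [Finset.mem_Icc]
  exact ⟨⟨hb1.1, hb2.1⟩, ⟨hb1.2, hb2.2⟩⟩

example : (Finset.Icc ((-1, -1) : ℤ × ℤ) (1, 1)).card = 9 := by decide



/-- Deterministic core of the first bound of Lemma 5.3 (linearised SNS analogue of Lemma 4.3):
for `α > 1` there is `C > 0` such that for all `t > 0` and all families `(a_r)_{r∈[0,t]}` of
Fourier data with `a_r 0 = 0`, `r ↦ a_r m` continuous and
`sup_{r∈[0,t]} ∑_{m≠0} |m|^{−2(α+1)}|a_r m|² < ∞`,
`∫₀ᵗ ∑_{k≠0} |k|^{−2α} (∫ₛᵗ e^{−|k|²(r−s)}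
    (∑_{0<|ℓ|≤√2, ℓ≠k} (1 − |k|²/|ℓ−k|²)² |a_r(ℓ−k)|²)^{1/2} dr)² ds
  ≤ C t³ sup_{r∈[0,t]} ∑_{m≠0} |m|^{−2(α+1)}|a_r m|²`. -/
theorem low_mode_gaussian_bound_linearised_NS (α : ℝ) (hα : 1 < α) :
    ∃ C : ℝ, 0 < C ∧ ∀ t : ℝ, 0 < t → ∀ a : ℝ → (ℤ × ℤ) → ℂ,
      (∀ r ∈ Set.Icc (0 : ℝ) t, a r 0 = 0) →
      (∀ m : ℤ × ℤ, ContinuousOn (fun r => a r m) (Set.Icc 0 t)) →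
      (⨆ r ∈ Set.Icc (0 : ℝ) t, ∑' m : ℤ × ℤ,
          (if m ≠ 0 then ENNReal.ofReal ((nsq m) ^ (-(α + 1)) * ‖a r m‖ ^ 2) else 0)) < ⊤ →
      (∫⁻ s in Set.Ioc (0 : ℝ) t, ∑' k : ℤ × ℤ,
          (if k ≠ 0 then
            ENNReal.ofReal ((nsq k) ^ (-α) *
              (∫ r in s..t, Real.exp (-nsq k * (r - s)) *
                Real.sqrt (∑' ℓ : ℤ × ℤ,
                  if ℓ ≠ 0 ∧ nsq ℓ ≤ 2 ∧ ℓ ≠ k then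
                    (1 - nsq k / nsq (ℓ - k)) ^ 2 * ‖a r (ℓ - k)‖ ^ 2
                  else 0)) ^ 2)
          else 0)) ≤
        ENNReal.ofReal (C * t ^ 3) *
          ⨆ r ∈ Set.Icc (0 : ℝ) t, ∑' m : ℤ × ℤ,
            (if m ≠ 0 then ENNReal.ofReal ((nsq m) ^ (-(α + 1)) * ‖a r m‖ ^ 2) else 0) := by
  classical
  refine ⟨216 * 16 ^ α, by positivity, ?_⟩
  intro t ht a ha0 hacont hsup
  set M : ℝ≥0∞ := ⨆ r ∈ Set.Icc (0 : ℝ) t, ∑' m : ℤ × ℤ,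
      (if m ≠ 0 then ENNReal.ofReal ((nsq m) ^ (-(α + 1)) * ‖a r m‖ ^ 2) else 0) with hM
  set F : Finset (ℤ × ℤ) := Finset.Icc (-1, -1) (1, 1) with hFdef
  have hFcard : F.card = 9 := by
    rw [hFdef, Finset.Icc_prod_def, Finset.card_product]
    simp [Int.card_Icc]
  set S : (ℤ × ℤ) → ℝ → ℝ := fun k r => ∑ ℓ ∈ F,
      (if ℓ ≠ 0 ∧ nsq ℓ ≤ 2 ∧ ℓ ≠ k then
        (1 - nsq k / nsq (ℓ - k)) ^ 2 * ‖a r (ℓ - k)‖ ^ 2 else 0) with hSdef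
  set T : (ℤ × ℤ) → ℝ → ℝ := fun k r => ∑ ℓ ∈ F,
      (if ℓ ≠ 0 ∧ nsq ℓ ≤ 2 ∧ ℓ ≠ k then
        nsq (ℓ - k) ^ (-(α + 1)) * ‖a r (ℓ - k)‖ ^ 2 else 0) with hTdef
  have hStsum : ∀ (k : ℤ × ℤ) (r : ℝ), (∑' ℓ : ℤ × ℤ,
      if ℓ ≠ 0 ∧ nsq ℓ ≤ 2 ∧ ℓ ≠ k then
        (1 - nsq k / nsq (ℓ - k)) ^ 2 * ‖a r (ℓ - k)‖ ^ 2 else 0) = S k r := by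
    intro k r
    refine tsum_eq_sum ?_
    intro ℓ hℓ
    rw [if_neg]
    rintro ⟨-, h2, -⟩
    exact hℓ (mem_lowF h2)
  have hSnn : ∀ k r, 0 ≤ S k r := by
    intro k r
    apply Finset.sum_nonneg
    intro ℓ _
    split_ifs with h
    · positivity
    · exact le_rfl
  have hScont : ∀ k, ContinuousOn (S k) (Set.Icc (0:ℝ) t) := by
    intro k
    apply continuousOn_finset_sum
    intro ℓ _
    split_ifs with h
    · exact continuousOn_const.mul (((hacont (ℓ - k)).norm).pow 2)
    · exact continuousOn_const
  have hTcont : ∀ k, ContinuousOn (T k) (Set.Icc (0:ℝ) t) := by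
    intro k
    apply continuousOn_finset_sum
    intro ℓ _
    split_ifs with h
    · exact continuousOn_const.mul (((hacont (ℓ - k)).norm).pow 2)
    · exact continuousOn_const
  have hSb : ∀ (k : ℤ × ℤ), k ≠ 0 → ∀ r : ℝ,
      nsq k ^ (-α) * S k r ≤ 24 * 16 ^ α * T k r := by
    intro k hk r
    rw [hSdef, hTdef]
    simp only
    rw [Finset.mul_sum, Finset.mul_sum]
    apply Finset.sum_le_sum
    intro ℓ _
    split_ifs with h
    · calc nsq k ^ (-α) * ((1 - nsq k / nsq (ℓ - k)) ^ 2 * ‖a r (ℓ - k)‖ ^ 2)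
          = (nsq k ^ (-α) * (1 - nsq k / nsq (ℓ - k)) ^ 2) * ‖a r (ℓ - k)‖ ^ 2 := by ring
        _ ≤ (24 * 16 ^ α * nsq (ℓ - k) ^ (-(α + 1))) * ‖a r (ℓ - k)‖ ^ 2 :=
            mul_le_mul_of_nonneg_right (key_bound hα hk h.2.2 h.2.1) (sq_nonneg _)
        _ = 24 * 16 ^ α * (nsq (ℓ - k) ^ (-(α + 1)) * ‖a r (ℓ - k)‖ ^ 2) := by ring
    · simp
  simp only [hStsum]
  refine le_trans (setLIntegral_mono
    (g := fun _ => ENNReal.ofReal (216 * 16 ^ α * t ^ 2) * M) measurable_const ?_) ?_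
  · -- pointwise-in-s bound
    intro s hs
    have hst : s ≤ t := hs.2
    have subIcc : Set.Icc s t ⊆ Set.Icc (0:ℝ) t := Set.Icc_subset_Icc hs.1.le le_rfl
    have subIoc : Set.Ioc s t ⊆ Set.Icc (0:ℝ) t := fun r hr => ⟨(hs.1.trans hr.1).le, hr.2⟩
    have hTmeas : ∀ k : ℤ × ℤ,
        AEMeasurable (fun r => ENNReal.ofReal (T k r)) (volume.restrict (Set.Ioc s t)) := by
      intro k
      have h0 : AEMeasurable (T k) (volume.restrict (Set.Icc (0:ℝ) t)) :=
        (hTcont k).aemeasurable measurableSet_Icc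
      have h1 : AEMeasurable (T k) (volume.restrict (Set.Ioc s t)) :=
        h0.mono_measure (Measure.restrict_mono subIoc le_rfl)
      exact ENNReal.measurable_ofReal.comp_aemeasurable h1
    have bk : ∀ k : ℤ × ℤ, k ≠ 0 →
        ENNReal.ofReal (nsq k ^ (-α) *
            (∫ r in s..t, Real.exp (-nsq k * (r - s)) * Real.sqrt (S k r)) ^ 2)
          ≤ ENNReal.ofReal (t - s) * (ENNReal.ofReal (24 * 16 ^ α) *
              ∫⁻ r in Set.Ioc s t, ENNReal.ofReal (T k r)) := by
      intro k hk
      have hc1 : ContinuousOn (fun r => Real.sqrt (S k r)) (Set.Icc s t) :=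
        Real.continuous_sqrt.comp_continuousOn ((hScont k).mono subIcc)
      have hc2 : ContinuousOn (fun r => Real.exp (-nsq k * (r - s)) * Real.sqrt (S k r))
          (Set.Icc s t) :=
        ((Real.continuous_exp.comp
          (continuous_const.mul (continuous_id.sub continuous_const))).continuousOn).mul hc1
      have hInt1 : IntervalIntegrable
          (fun r => Real.exp (-nsq k * (r - s)) * Real.sqrt (S k r)) volume s t := by
        apply ContinuousOn.intervalIntegrable
        rwa [Set.uIcc_of_le hst]
      have hInt2 : IntervalIntegrable (fun r => Real.sqrt (S k r)) volume s t := by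
        apply ContinuousOn.intervalIntegrable
        rwa [Set.uIcc_of_le hst]
      have hI0 : 0 ≤ ∫ r in s..t, Real.exp (-nsq k * (r - s)) * Real.sqrt (S k r) :=
        intervalIntegral.integral_nonneg hst
          (fun r _ => mul_nonneg (Real.exp_nonneg _) (Real.sqrt_nonneg _))
      have hIle : (∫ r in s..t, Real.exp (-nsq k * (r - s)) * Real.sqrt (S k r))
          ≤ ∫ r in s..t, Real.sqrt (S k r) := by
        apply intervalIntegral.integral_mono_on hst hInt1 hInt2
        intro r hr
        have h1 : Real.exp (-nsq k * (r - s)) ≤ 1 := by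
          rw [Real.exp_le_one_iff]
          nlinarith [nsq_nonneg k, hr.1]
        exact mul_le_of_le_one_left (Real.sqrt_nonneg _) h1
      have hmeasS : AEMeasurable (fun r => ENNReal.ofReal (Real.sqrt (S k r)))
          (volume.restrict (Set.Ioc s t)) := by
        have h0 : AEMeasurable (S k) (volume.restrict (Set.Icc (0:ℝ) t)) :=
          (hScont k).aemeasurable measurableSet_Icc
        have h1 : AEMeasurable (S k) (volume.restrict (Set.Ioc s t)) :=
          h0.mono_measure (Measure.restrict_mono subIoc le_rfl)
        exact (ENNReal.measurable_ofReal.comp Real.continuous_sqrt.measurable).comp_aemeasurable h1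
      have hsq2 : ∀ r : ℝ, (ENNReal.ofReal (Real.sqrt (S k r))) ^ (2:ℝ)
          = ENNReal.ofReal (S k r) := by
        intro r
        rw [ENNReal.ofReal_rpow_of_nonneg (Real.sqrt_nonneg _) (by norm_num)]
        congr 1
        rw [show (2:ℝ) = ((2:ℕ):ℝ) by norm_num, Real.rpow_natCast]
        exact Real.sq_sqrt (hSnn k r)
      have holder : (∫⁻ r in Set.Ioc s t, ENNReal.ofReal (Real.sqrt (S k r)))
          ≤ (ENNReal.ofReal (t - s)) ^ (1/2 : ℝ)
            * (∫⁻ r in Set.Ioc s t, ENNReal.ofReal (S k r)) ^ (1/2 : ℝ) := by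
        have hconj : Real.HolderConjugate 2 2 := by constructor <;> norm_num
        have h := ENNReal.lintegral_mul_le_Lp_mul_Lq (volume.restrict (Set.Ioc s t)) hconj
          (aemeasurable_const : AEMeasurable (fun _ => (1:ℝ≥0∞)) _) hmeasS
        simp only [Pi.mul_apply, one_mul, ENNReal.one_rpow, lintegral_one,
          Measure.restrict_apply_univ, Real.volume_Ioc, hsq2] at h
        exact h
      have hsqhelp : ∀ x y : ℝ≥0∞, (x ^ (1/2:ℝ) * y ^ (1/2:ℝ)) ^ 2 = x * y := by
        intro x y
        rw [mul_pow, ← ENNReal.rpow_natCast (x ^ (1/2:ℝ)) 2,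
          ← ENNReal.rpow_natCast (y ^ (1/2:ℝ)) 2, ← ENNReal.rpow_mul, ← ENNReal.rpow_mul]
        norm_num
      have hI2 : ENNReal.ofReal (∫ r in s..t, Real.exp (-nsq k * (r - s)) * Real.sqrt (S k r))
          ≤ ∫⁻ r in Set.Ioc s t, ENNReal.ofReal (Real.sqrt (S k r)) := by
        calc ENNReal.ofReal (∫ r in s..t, Real.exp (-nsq k * (r - s)) * Real.sqrt (S k r))
            ≤ ENNReal.ofReal (∫ r in s..t, Real.sqrt (S k r)) := ENNReal.ofReal_le_ofReal hIle
          _ = _ := by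
              rw [intervalIntegral.integral_of_le hst]
              exact ofReal_integral_eq_lintegral_ofReal hInt2.1
                (ae_of_all _ fun r => Real.sqrt_nonneg _)
      calc ENNReal.ofReal (nsq k ^ (-α) *
            (∫ r in s..t, Real.exp (-nsq k * (r - s)) * Real.sqrt (S k r)) ^ 2)
          = ENNReal.ofReal (nsq k ^ (-α)) *
            (ENNReal.ofReal (∫ r in s..t, Real.exp (-nsq k * (r - s)) * Real.sqrt (S k r))) ^ 2 := by
            rw [ENNReal.ofReal_mul (Real.rpow_nonneg (nsq_nonneg k) _), ENNReal.ofReal_pow hI0]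
        _ ≤ ENNReal.ofReal (nsq k ^ (-α)) *
            ((ENNReal.ofReal (t - s)) ^ (1/2 : ℝ)
              * (∫⁻ r in Set.Ioc s t, ENNReal.ofReal (S k r)) ^ (1/2 : ℝ)) ^ 2 := by
            gcongr
            exact hI2.trans holder
        _ = ENNReal.ofReal (t - s) * (ENNReal.ofReal (nsq k ^ (-α)) *
              ∫⁻ r in Set.Ioc s t, ENNReal.ofReal (S k r)) := by
            rw [hsqhelp]; ring
        _ = ENNReal.ofReal (t - s) *
              ∫⁻ r in Set.Ioc s t, ENNReal.ofReal (nsq k ^ (-α)) * ENNReal.ofReal (S k r) := by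
            rw [lintegral_const_mul' _ _ ENNReal.ofReal_ne_top]
        _ ≤ ENNReal.ofReal (t - s) *
              ∫⁻ r in Set.Ioc s t, ENNReal.ofReal (24 * 16 ^ α) * ENNReal.ofReal (T k r) := by
            refine mul_le_mul_right (lintegral_mono fun r => ?_) _
            rw [← ENNReal.ofReal_mul (Real.rpow_nonneg (nsq_nonneg k) _),
              ← ENNReal.ofReal_mul (by positivity)]
            exact ENNReal.ofReal_le_ofReal (hSb k hk r)
        _ = ENNReal.ofReal (t - s) * (ENNReal.ofReal (24 * 16 ^ α) *
              ∫⁻ r in Set.Ioc s t, ENNReal.ofReal (T k r)) := by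
            rw [lintegral_const_mul' _ _ ENNReal.ofReal_ne_top]
    have hTsum_le : ∀ r ∈ Set.Ioc s t,
        (∑' k : ℤ × ℤ, ENNReal.ofReal (T k r)) ≤ 9 * M := by
      intro r hr
      have hrIcc : r ∈ Set.Icc (0:ℝ) t := subIoc hr
      have step1 : ∀ k : ℤ × ℤ, ENNReal.ofReal (T k r) = ∑ ℓ ∈ F,
          (if ℓ ≠ 0 ∧ nsq ℓ ≤ 2 ∧ ℓ ≠ k then
            ENNReal.ofReal (nsq (ℓ - k) ^ (-(α + 1)) * ‖a r (ℓ - k)‖ ^ 2) else 0) := by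
        intro k
        rw [hTdef]
        simp only
        rw [ENNReal.ofReal_sum_of_nonneg (fun ℓ _ => by
          split_ifs with h
          · exact mul_nonneg (Real.rpow_nonneg (nsq_nonneg _) _) (sq_nonneg _)
          · exact le_rfl)]
        refine Finset.sum_congr rfl fun ℓ _ => ?_
        split_ifs with h <;> simp
      calc (∑' k : ℤ × ℤ, ENNReal.ofReal (T k r))
          = ∑' k : ℤ × ℤ, ∑ ℓ ∈ F,
              (if ℓ ≠ 0 ∧ nsq ℓ ≤ 2 ∧ ℓ ≠ k then
                ENNReal.ofReal (nsq (ℓ - k) ^ (-(α + 1)) * ‖a r (ℓ - k)‖ ^ 2) else 0) := by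
            simp only [step1]
        _ = ∑ ℓ ∈ F, ∑' k : ℤ × ℤ,
              (if ℓ ≠ 0 ∧ nsq ℓ ≤ 2 ∧ ℓ ≠ k then
                ENNReal.ofReal (nsq (ℓ - k) ^ (-(α + 1)) * ‖a r (ℓ - k)‖ ^ 2) else 0) :=
            Summable.tsum_finsetSum (fun ℓ _ => ENNReal.summable)
        _ ≤ ∑ ℓ ∈ F, (∑' m : ℤ × ℤ,
              (if m ≠ 0 then ENNReal.ofReal (nsq m ^ (-(α + 1)) * ‖a r m‖ ^ 2) else 0)) := by
            apply Finset.sum_le_sum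
            intro ℓ _
            rw [← Equiv.tsum_eq (Equiv.subLeft ℓ) (fun k =>
              (if ℓ ≠ 0 ∧ nsq ℓ ≤ 2 ∧ ℓ ≠ k then
                ENNReal.ofReal (nsq (ℓ - k) ^ (-(α + 1)) * ‖a r (ℓ - k)‖ ^ 2) else 0))]
            apply ENNReal.tsum_le_tsum
            intro m
            simp only [Equiv.subLeft_apply, sub_sub_cancel]
            by_cases hc : ℓ ≠ 0 ∧ nsq ℓ ≤ 2 ∧ ℓ ≠ ℓ - m
            · rw [if_pos hc, if_pos]
              intro hm0
              exact hc.2.2 (by rw [hm0, sub_zero])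
            · rw [if_neg hc]
              exact zero_le
        _ = (9:ℕ) • (∑' m : ℤ × ℤ,
              (if m ≠ 0 then ENNReal.ofReal (nsq m ^ (-(α + 1)) * ‖a r m‖ ^ 2) else 0)) := by
            rw [Finset.sum_const, hFcard]
        _ ≤ 9 * M := by
            rw [nsmul_eq_mul, hM]
            have h9 : ((9:ℕ):ℝ≥0∞) = 9 := by norm_num
            rw [h9]
            exact mul_le_mul_right (le_biSup
              (fun r => ∑' m : ℤ × ℤ,
                (if m ≠ 0 then ENNReal.ofReal (nsq m ^ (-(α + 1)) * ‖a r m‖ ^ 2) else 0))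
              hrIcc) _
    calc (∑' k : ℤ × ℤ,
          (if k ≠ 0 then
            ENNReal.ofReal (nsq k ^ (-α) *
              (∫ r in s..t, Real.exp (-nsq k * (r - s)) * Real.sqrt (S k r)) ^ 2) else 0))
        ≤ ∑' k : ℤ × ℤ, ENNReal.ofReal (t - s) * (ENNReal.ofReal (24 * 16 ^ α) *
            ∫⁻ r in Set.Ioc s t, ENNReal.ofReal (T k r)) := by
          apply ENNReal.tsum_le_tsum
          intro k
          by_cases hk : k = 0
          · simp [hk]
          · rw [if_pos hk]
            exact bk k hk
      _ = ENNReal.ofReal (t - s) * (ENNReal.ofReal (24 * 16 ^ α) *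
            ∑' k : ℤ × ℤ, ∫⁻ r in Set.Ioc s t, ENNReal.ofReal (T k r)) := by
          rw [ENNReal.tsum_mul_left, ENNReal.tsum_mul_left]
      _ = ENNReal.ofReal (t - s) * (ENNReal.ofReal (24 * 16 ^ α) *
            ∫⁻ r in Set.Ioc s t, ∑' k : ℤ × ℤ, ENNReal.ofReal (T k r)) := by
          rw [lintegral_tsum hTmeas]
      _ ≤ ENNReal.ofReal (t - s) * (ENNReal.ofReal (24 * 16 ^ α) *
            ∫⁻ _ in Set.Ioc s t, (9:ℝ≥0∞) * M) := by
          refine mul_le_mul_right (mul_le_mul_right ?_ _) _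
          exact setLIntegral_mono measurable_const hTsum_le
      _ = ENNReal.ofReal (t - s) * (ENNReal.ofReal (24 * 16 ^ α) *
            (9 * M * ENNReal.ofReal (t - s))) := by
          rw [setLIntegral_const, Real.volume_Ioc]
      _ = ENNReal.ofReal (216 * 16 ^ α * (t - s) ^ 2) * M := by
          rw [show (216:ℝ) * 16 ^ α * (t - s) ^ 2 = (t - s) * ((24 * 16 ^ α) * (9 * (t - s))) by ring]
          rw [ENNReal.ofReal_mul (by linarith [hs.2] : (0:ℝ) ≤ t - s),
            ENNReal.ofReal_mul (by positivity : (0:ℝ) ≤ 24 * 16 ^ α),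
            ENNReal.ofReal_mul (by norm_num : (0:ℝ) ≤ 9)]
          rw [show ENNReal.ofReal (9:ℝ) = (9:ℝ≥0∞) by simp]
          ring
      _ ≤ ENNReal.ofReal (216 * 16 ^ α * t ^ 2) * M := by
          refine mul_le_mul_left (ENNReal.ofReal_le_ofReal ?_) _
          have h1 : 0 ≤ t - s := by linarith [hs.2]
          have h2 : t - s ≤ t := by linarith [hs.1]
          have h3 : (t - s) ^ 2 ≤ t ^ 2 := by nlinarith
          nlinarith [Real.rpow_nonneg (by norm_num : (0:ℝ) ≤ 16) α]
  · rw [setLIntegral_const, Real.volume_Ioc, sub_zero]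
    calc ENNReal.ofReal (216 * 16 ^ α * t ^ 2) * M * ENNReal.ofReal t
        = ENNReal.ofReal (216 * 16 ^ α * t ^ 2) * ENNReal.ofReal t * M := by ring
      _ = ENNReal.ofReal (216 * 16 ^ α * t ^ 2 * t) * M := by
          rw [← ENNReal.ofReal_mul (by positivity)]
      _ = ENNReal.ofReal (216 * 16 ^ α * t ^ 3) * M := by
          rw [show 216 * 16 ^ α * t ^ 2 * t = 216 * 16 ^ α * t ^ 3 by ring]
      _ ≤ ENNReal.ofReal (216 * 16 ^ α * t ^ 3) * M := le_rfl
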